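/- For every real θ with 0 < θ < 1/e and every ε > 0, there exists a polynomial P_ε with nonnegative real coefficients such that for all real x with 0 < x < ρ_a, A(x) ≤ f(x) + |s|(1+ε)·x·A′(θx)·A(x) + |s|·( A(θ^θ x)² + θ^θ·x·A(θ^θ x)·A′(θ^θ x) ) + P_ε(x), where A′ denotes the termwise derivative of the power series A; the middle expression |s|·(A(θ^θ x)² + θ^θ x A(θ^θ x) A′(θ^θ x)) equals (|s|/(2x))·(d/dx)(x² A(θ^θ x)²). (All series appearing converge since θx and θ^θ x lie in (0, ρ_a).) -/

import Mathlib

set_option maxHeartbeats 1000000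

open scoped BigOperators ENNReal NNReal

/-- The radius of convergence of the power series with real coefficients `c`. -/
noncomputable def seriesRadius (c : ℕ → ℝ) : ℝ≥0∞ :=
  ⨆ (r : ℝ≥0) (_ : Summable fun n => |c n| * (r : ℝ) ^ n), (r : ℝ≥0∞)


lemma aux_pow_le_choose : ∀ (i n : ℕ), i ≤ n → (n:ℝ)^i ≤ (i:ℝ)^i * (n.choose i) := by
  intro i
  induction i with
  | zero => intro n _; simp
  | succ i ih =>
    intro n hn
    have hn1 : 1 ≤ n := le_trans (Nat.succ_le_succ (Nat.zero_le i)) hn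
    have hi : i ≤ n - 1 := by omega
    have hID : (n:ℝ) * ((n-1).choose i) = (n.choose (i+1)) * (i+1) := by
      have := Nat.add_one_mul_choose_eq (n-1) i
      have h2 : (n-1) + 1 = n := by omega
      rw [h2] at this
      exact_mod_cast congrArg (Nat.cast (R := ℝ)) this
    have hIH := ih (n-1) hi
    have hcast : ((n-1:ℕ):ℝ) = (n:ℝ) - 1 := by
      push_cast [Nat.cast_sub hn1]; ring
    rw [hcast] at hIH
    have hmul : ((i:ℝ)+1) * ((n:ℝ)-1) ≥ (i:ℝ) * n := by
      have : (i:ℝ) + 1 ≤ n := by exact_mod_cast hn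
      nlinarith
    have hii : (0:ℝ) < (i:ℝ)^i := by
      rcases Nat.eq_zero_or_pos i with h | h
      · subst h; norm_num
      · positivity
    -- key : ((i:ℝ)+1)^i * ((n:ℝ)-1)^i ≥ (i:ℝ)^i * (n:ℝ)^i
    have hkey : (i:ℝ)^i * (n:ℝ)^i ≤ ((i:ℝ)+1)^i * ((n:ℝ)-1)^i := by
      rw [← mul_pow, ← mul_pow]
      apply pow_le_pow_left₀ (by positivity)
      linarith [hmul]
    have hch : (0:ℝ) ≤ ((n-1).choose i : ℝ) := by positivity
    -- (i+1)^(i+1) * C(n,i+1) = (i+1)^i * ((i+1)*C(n,i+1)) = (i+1)^i * n * C(n-1,i)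
    have expand : ((i:ℝ)+1)^(i+1) * (n.choose (i+1)) = ((i:ℝ)+1)^i * ((n:ℝ) * ((n-1).choose i)) := by
      rw [hID]; ring
    have step : (n:ℝ)^i * (n:ℝ) ≤ ((i:ℝ)+1)^i * ((n:ℝ) * ((n-1).choose i)) := by
      have h1 : (i:ℝ)^i * ((n:ℝ)^i * (n:ℝ)) ≤ (i:ℝ)^i * (((i:ℝ)+1)^i * ((n:ℝ) * ((n-1).choose i))) := by
        have c1 : ((n:ℝ)-1)^i ≤ (i:ℝ)^i * ((n-1).choose i) := hIH
        have c2 : ((i:ℝ)+1)^i * ((n:ℝ)-1)^i ≤ ((i:ℝ)+1)^i * ((i:ℝ)^i * ((n-1).choose i)) := by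
          apply mul_le_mul_of_nonneg_left c1 (by positivity)
        have c3 : (i:ℝ)^i * (n:ℝ)^i ≤ ((i:ℝ)+1)^i * ((i:ℝ)^i * ((n-1).choose i)) :=
          le_trans hkey c2
        have hnpos : (0:ℝ) ≤ (n:ℝ) := by positivity
        calc (i:ℝ)^i * ((n:ℝ)^i * (n:ℝ)) = ((i:ℝ)^i * (n:ℝ)^i) * n := by ring
          _ ≤ (((i:ℝ)+1)^i * ((i:ℝ)^i * ((n-1).choose i))) * n := by
              apply mul_le_mul_of_nonneg_right c3 hnpos
          _ = (i:ℝ)^i * (((i:ℝ)+1)^i * ((n:ℝ) * ((n-1).choose i))) := by ring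
      exact le_of_mul_le_mul_left h1 hii
    calc (n:ℝ)^(i+1) = (n:ℝ)^i * n := by ring
      _ ≤ ((i:ℝ)+1)^i * ((n:ℝ) * ((n-1).choose i)) := step
      _ = ((i:ℝ)+1)^(i+1) * (n.choose (i+1)) := expand.symm
      _ = ((i+1:ℕ):ℝ)^(i+1) * (n.choose (i+1)) := by push_cast; ring

lemma aux_maxterm (n i : ℕ) (hi1 : 1 ≤ i) (hin : i < n) :
    (1:ℝ) ≤ (n+1) * (n.choose i) * ((i:ℝ)/n)^i * (((n-i:ℕ):ℝ)/n)^(n-i) := by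
  set β : ℝ := (i:ℝ)/n with hβ
  have hn0 : (0:ℝ) < n := by exact_mod_cast Nat.zero_lt_of_lt hin
  have hi0 : (0:ℝ) < i := by exact_mod_cast hi1
  have hβ0 : 0 < β := div_pos hi0 hn0
  have hβ1 : β < 1 := by
    rw [hβ, div_lt_one hn0]; exact_mod_cast hin
  have hβn : β * n = i := by rw [hβ]; field_simp
  have h1β : ((n-i:ℕ):ℝ)/n = 1 - β := by
    rw [hβ, Nat.cast_sub (le_of_lt hin)]; field_simp
  rw [h1β]
  set t : ℕ → ℝ := fun k => (n.choose k : ℝ) * β^k * (1-β)^(n-k) with ht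
  have hsum : ∑ k ∈ Finset.range (n+1), t k = 1 := by
    calc ∑ k ∈ Finset.range (n+1), (n.choose k : ℝ) * β^k * (1-β)^(n-k)
        = ∑ k ∈ Finset.range (n+1), β^k * (1-β)^(n-k) * (n.choose k) := by
          apply Finset.sum_congr rfl; intro k _; ring
      _ = (β + (1-β))^n := (add_pow β (1-β) n).symm
      _ = 1 := by norm_num
  have hratio : ∀ k, k < n → t (k+1) * (((k:ℝ)+1)*(1-β)) = t k * (((n-k:ℕ):ℝ)*β) := by
    intro k hk
    have hch : ((n.choose (k+1) : ℝ)) * ((k:ℝ)+1) = (n.choose k : ℝ) * ((n-k:ℕ):ℝ) := by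
      exact_mod_cast congrArg (Nat.cast (R := ℝ)) (Nat.choose_succ_right_eq n k)
    have hpow : (1-β)^(n-k) = (1-β)^(n-(k+1)) * (1-β) := by
      rw [← pow_succ]; congr 1; omega
    rw [ht]; simp only []
    rw [hpow]
    calc (n.choose (k+1):ℝ) * β^(k+1) * (1-β)^(n-(k+1)) * (((k:ℝ)+1)*(1-β))
        = ((n.choose (k+1):ℝ) * ((k:ℝ)+1)) * β^(k+1) * ((1-β)^(n-(k+1)) * (1-β)) := by ring
      _ = ((n.choose k:ℝ) * ((n-k:ℕ):ℝ)) * β^(k+1) * ((1-β)^(n-(k+1)) * (1-β)) := by rw [hch]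
      _ = (n.choose k:ℝ) * β^k * ((1-β)^(n-(k+1)) * (1-β)) * (((n-k:ℕ):ℝ)*β) := by ring
  have htnn : ∀ k, 0 ≤ t k := by
    intro k; rw [ht]; have : 0 ≤ 1 - β := by linarith
    positivity
  have hup : ∀ k, k < i → t k ≤ t (k+1) := by
    intro k hk
    have hkn : k < n := lt_trans hk hin
    have hr := hratio k hkn
    have hnk : ((n-k:ℕ):ℝ) = (n:ℝ) - k := by rw [Nat.cast_sub (le_of_lt hkn)]
    have hcmp : ((k:ℝ)+1)*(1-β) ≤ ((n-k:ℕ):ℝ)*β := by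
      rw [hnk]
      rw [← mul_le_mul_iff_left₀ hn0]
      have e1 : ((k:ℝ)+1)*(1-β)*n = ((k:ℝ)+1)*((n:ℝ)-i) := by
        have : (1-β)*n = (n:ℝ) - i := by rw [sub_mul, hβn]; ring
        rw [mul_assoc, this]
      have e2 : ((n:ℝ)-k)*β*n = ((n:ℝ)-k)*i := by
        rw [mul_assoc, hβn]
      rw [e1, e2]
      have hki : (k:ℝ) + 1 ≤ (i:ℝ) := by exact_mod_cast hk
      have hin' : (i:ℝ) < n := by exact_mod_cast hin
      nlinarith
    have hpos : (0:ℝ) < ((n-k:ℕ):ℝ)*β := by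
      rw [hnk]
      have : (k:ℝ) < n := by exact_mod_cast hkn
      have : (0:ℝ) < (n:ℝ) - k := by linarith
      positivity
    have step : t k * (((n-k:ℕ):ℝ)*β) ≤ t (k+1) * (((n-k:ℕ):ℝ)*β) := by
      rw [← hr]
      apply mul_le_mul_of_nonneg_left hcmp (htnn _)
    exact le_of_mul_le_mul_right step hpos
  have hdown : ∀ k, i ≤ k → k < n → t (k+1) ≤ t k := by
    intro k hik hkn
    have hr := hratio k hkn
    have hnk : ((n-k:ℕ):ℝ) = (n:ℝ) - k := by rw [Nat.cast_sub (le_of_lt hkn)]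
    have hcmp : ((n-k:ℕ):ℝ)*β ≤ ((k:ℝ)+1)*(1-β) := by
      rw [hnk, ← mul_le_mul_iff_left₀ hn0]
      have e1 : ((k:ℝ)+1)*(1-β)*n = ((k:ℝ)+1)*((n:ℝ)-i) := by
        have : (1-β)*n = (n:ℝ) - i := by rw [sub_mul, hβn]; ring
        rw [mul_assoc, this]
      have e2 : ((n:ℝ)-k)*β*n = ((n:ℝ)-k)*i := by rw [mul_assoc, hβn]
      rw [e1, e2]
      have hik' : (i:ℝ) ≤ k := by exact_mod_cast hik
      have hin' : (i:ℝ) < n := by exact_mod_cast hin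
      nlinarith
    have hpos : (0:ℝ) < ((k:ℝ)+1)*(1-β) := by
      have : 0 < 1 - β := by linarith
      positivity
    have step : t (k+1) * (((k:ℝ)+1)*(1-β)) ≤ t k * (((k:ℝ)+1)*(1-β)) := by
      rw [hr]
      apply mul_le_mul_of_nonneg_left hcmp (htnn _)
    exact le_of_mul_le_mul_right step hpos
  have hup' : ∀ m, m ≤ i → t (i - m) ≤ t i := by
    intro m
    induction m with
    | zero => intro _; simp
    | succ m ihm =>
      intro hm
      have h1 : i - (m+1) < i := by omega
      have h2 : i - (m+1) + 1 = i - m := by omega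
      calc t (i - (m+1)) ≤ t (i - (m+1) + 1) := hup _ h1
        _ = t (i - m) := by rw [h2]
        _ ≤ t i := ihm (by omega)
  have hdown' : ∀ m, i + m ≤ n → t (i + m) ≤ t i := by
    intro m
    induction m with
    | zero => intro _; simp
    | succ m ihm =>
      intro hm
      calc t (i + (m+1)) = t ((i+m)+1) := by ring_nf
        _ ≤ t (i + m) := hdown (i+m) (by omega) (by omega)
        _ ≤ t i := ihm (by omega)
  have hmax : ∀ k ∈ Finset.range (n+1), t k ≤ t i := by
    intro k hk
    rw [Finset.mem_range] at hk
    rcases le_or_gt k i with h | h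
    · have : k = i - (i - k) := by omega
      rw [this]; exact hup' (i-k) (by omega)
    · have : k = i + (k - i) := by omega
      rw [this]; exact hdown' (k-i) (by omega)
  have hfin : (1:ℝ) ≤ (n+1) * t i := by
    have := Finset.sum_le_card_nsmul (Finset.range (n+1)) t (t i) hmax
    rw [hsum, Finset.card_range] at this
    calc (1:ℝ) ≤ (n+1) • t i := this
      _ = (n+1) * t i := by
        rw [nsmul_eq_mul]; push_cast; ring
  calc (1:ℝ) ≤ (n+1) * t i := hfin
    _ = (n+1) * (n.choose i) * β^i * (1-β)^(n-i) := by rw [ht]; ring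

lemma aux_entropy_mono (θ β : ℝ) (hθ0 : 0 < θ) (hθ2 : θ < 1/2)
    (h1 : θ ≤ β) (h2 : β ≤ 1 - θ) :
    β * Real.log β + (1-β) * Real.log (1-β) ≤ θ * Real.log θ + (1-θ) * Real.log (1-θ) := by
  set m : ℝ → ℝ := fun t => t * Real.log t + (1-t) * Real.log (1-t) with hm
  have hf : ConvexOn ℝ (Set.Ici 0) (fun t : ℝ => t * Real.log t) := Real.convexOn_mul_log
  have A : ℝ →ᵃ[ℝ] ℝ := AffineMap.lineMap (1:ℝ) (0:ℝ)
  have hg : ConvexOn ℝ (Set.Iic 1) (fun t : ℝ => (1-t) * Real.log (1-t)) := by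
    have := hf.comp_affineMap (AffineMap.lineMap (1:ℝ) (0:ℝ))
    have heq : ⇑(AffineMap.lineMap (1:ℝ) (0:ℝ)) = fun t : ℝ => 1 - t := by
      funext t; simp [AffineMap.lineMap_apply]; ring
    rw [heq] at this
    have hpre : ((fun t : ℝ => 1 - t) ⁻¹' Set.Ici 0) = Set.Iic 1 := by
      ext t; simp only [Set.mem_preimage, Set.mem_Ici, Set.mem_Iic, sub_nonneg]
    rw [hpre] at this
    exact this
  have hconv : ConvexOn ℝ (Set.Icc θ (1-θ)) m := by
    have h1' : Set.Icc θ (1-θ) ⊆ Set.Ici 0 := fun t ht => le_trans (le_of_lt hθ0) ht.1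
    have h2' : Set.Icc θ (1-θ) ⊆ Set.Iic 1 := fun t ht => le_trans ht.2 (by linarith)
    exact ConvexOn.add (hf.subset h1' (convex_Icc _ _)) (hg.subset h2' (convex_Icc _ _))
  have hsym : m (1-θ) = m θ := by
    rw [hm]; simp only []
    have : (1:ℝ) - (1 - θ) = θ := by ring
    rw [this]; ring
  have hseg : β ∈ segment ℝ θ (1-θ) := by
    rw [segment_eq_Icc (by linarith)]
    exact ⟨h1, h2⟩
  have := hconv.le_on_segment (Set.left_mem_Icc.2 (by linarith)) (Set.right_mem_Icc.2 (by linarith)) hseg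
  rw [hsym, sup_idem] at this
  exact this

lemma aux_choose_entropy (θ : ℝ) (hθ0 : 0 < θ) (hθh : θ < 1/2) (n i : ℕ)
    (h1i : 1 ≤ i) (hin : i < n)
    (hi : θ * n < i) (hni : θ * n < ((n-i:ℕ):ℝ))
    (hN : ((n:ℝ)+1) * Real.exp ((1-θ) * Real.log (1-θ)) ^ n ≤ 1) :
    1 ≤ (n.choose i : ℝ) * (Real.rpow θ θ) ^ n := by
  have hn0 : (0:ℝ) < n := by exact_mod_cast Nat.zero_lt_of_lt hin
  set β : ℝ := (i:ℝ)/n with hβ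
  have hβθ : θ < β := by rw [hβ, lt_div_iff₀ hn0]; linarith
  have hβ1θ : β < 1 - θ := by
    have h' : ((n-i:ℕ):ℝ) = (n:ℝ) - i := by rw [Nat.cast_sub (le_of_lt hin)]
    rw [h'] at hni
    rw [hβ, div_lt_iff₀ hn0]
    nlinarith
  have hβ0 : 0 < β := lt_trans hθ0 hβθ
  have hβ1 : β < 1 := by linarith
  have h1β' : ((n-i:ℕ):ℝ)/n = 1 - β := by
    rw [hβ, Nat.cast_sub (le_of_lt hin)]; field_simp
  have hiβ : (i:ℝ) = n * β := by rw [hβ]; field_simp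
  have hniβ : ((n-i:ℕ):ℝ) = n * (1-β) := by
    rw [Nat.cast_sub (le_of_lt hin), hiβ]; ring
  -- express powers as exponentials
  have hpow1 : β ^ i = Real.exp ((i:ℝ) * Real.log β) := by
    rw [← Real.exp_log hβ0, ← Real.exp_nat_mul, Real.exp_log hβ0]
  have hpow2 : (1-β) ^ (n-i) = Real.exp (((n-i:ℕ):ℝ) * Real.log (1-β)) := by
    rw [← Real.exp_log (by linarith : (0:ℝ) < 1-β), ← Real.exp_nat_mul,
      Real.exp_log (by linarith : (0:ℝ) < 1-β)]
  have hm := aux_entropy_mono θ β hθ0 hθh (le_of_lt hβθ) (le_of_lt hβ1θ)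
  have hent : β ^ i * (1-β) ^ (n-i) ≤
      Real.exp ((n:ℝ) * (θ * Real.log θ)) * Real.exp ((n:ℝ)*((1-θ) * Real.log (1-θ))) := by
    rw [hpow1, hpow2, ← Real.exp_add, ← Real.exp_add]
    apply Real.exp_le_exp.2
    rw [hiβ, hniβ]
    have expand : n * β * Real.log β + n * (1-β) * Real.log (1-β)
        = (n:ℝ) * (β * Real.log β + (1-β) * Real.log (1-β)) := by ring
    rw [expand]
    have : (n:ℝ) * (θ * Real.log θ) + (n:ℝ)*((1-θ) * Real.log (1-θ))
        = (n:ℝ) * (θ * Real.log θ + (1-θ) * Real.log (1-θ)) := by ring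
    rw [this]
    exact mul_le_mul_of_nonneg_left hm (le_of_lt hn0)
  have hq1 : Real.rpow θ θ = Real.exp (θ * Real.log θ) := by
    rw [show Real.rpow θ θ = θ ^ (θ:ℝ) from rfl, Real.rpow_def_of_pos hθ0, mul_comm]
  have hq : Real.rpow θ θ ^ n = Real.exp ((n:ℝ) * (θ * Real.log θ)) := by
    rw [hq1, ← Real.exp_nat_mul]
  have hu : Real.exp ((n:ℝ)*((1-θ) * Real.log (1-θ))) = Real.exp ((1-θ) * Real.log (1-θ)) ^ n := by
    rw [← Real.exp_nat_mul]
  have hmt := aux_maxterm n i h1i hin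
  rw [h1β'] at hmt
  have hqn0 : 0 < Real.rpow θ θ ^ n := by
    have : 0 < Real.rpow θ θ := Real.rpow_pos_of_pos hθ0 θ
    positivity
  have hC0 : (0:ℝ) ≤ (n.choose i : ℝ) := by positivity
  -- (n+1) * β^i * (1-β)^(n-i) ≤ q^n
  have hkey : ((n:ℝ)+1) * (β ^ i * (1-β) ^ (n-i)) ≤ Real.rpow θ θ ^ n := by
    calc ((n:ℝ)+1) * (β ^ i * (1-β) ^ (n-i))
        ≤ ((n:ℝ)+1) * (Real.exp ((n:ℝ) * (θ * Real.log θ)) * Real.exp ((n:ℝ)*((1-θ) * Real.log (1-θ)))) := by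
          apply mul_le_mul_of_nonneg_left hent (by linarith)
      _ = (Real.rpow θ θ ^ n) * (((n:ℝ)+1) * Real.exp ((1-θ) * Real.log (1-θ)) ^ n) := by
          rw [hq, hu]; ring
      _ ≤ (Real.rpow θ θ ^ n) * 1 := by
          apply mul_le_mul_of_nonneg_left hN (le_of_lt hqn0)
      _ = Real.rpow θ θ ^ n := by ring
  calc (1:ℝ) ≤ (n+1) * (n.choose i) * β^i * (1-β)^(n-i) := hmt
    _ = (n.choose i : ℝ) * (((n:ℝ)+1) * (β ^ i * (1-β) ^ (n-i))) := by ring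
    _ ≤ (n.choose i : ℝ) * (Real.rpow θ θ ^ n) := mul_le_mul_of_nonneg_left hkey hC0

lemma aux_T1_scalar (θ ε : ℝ) (hθ0 : 0 < θ) (hε : 0 < ε) (n i : ℕ)
    (h1i : 1 ≤ i) (hin : i < n) (hiθ : (i:ℝ) ≤ θ * n)
    (hNε : (n:ℝ)+2 ≤ (1+ε)*n) :
    ((n:ℝ)+2) ≤ (1+ε) * i * θ^(i-1) * (n.choose i) := by
  have hi0 : (0:ℝ) < i := by exact_mod_cast h1i
  have hn0 : (0:ℝ) < n := by exact_mod_cast Nat.zero_lt_of_lt hin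
  have hC : ((n:ℝ)/i)^i ≤ (n.choose i : ℝ) := by
    rw [div_pow, div_le_iff₀ (by positivity)]
    calc (n:ℝ)^i ≤ (i:ℝ)^i * (n.choose i) := aux_pow_le_choose i n (le_of_lt hin)
      _ = (n.choose i : ℝ) * (i:ℝ)^i := by ring
  obtain ⟨k, hk⟩ : ∃ k, i = k + 1 := ⟨i - 1, by omega⟩
  have hk1 : i - 1 = k := by omega
  have hid : (i:ℝ) * θ^k * ((n:ℝ)/i)^i = (n:ℝ) * (θ*n/i)^k := by
    rw [hk]
    push_cast
    rw [pow_succ]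
    rw [show θ * (n:ℝ) / ((k:ℝ)+1) = θ * ((n:ℝ)/((k:ℝ)+1)) by ring]
    rw [mul_pow θ]
    have hk0 : ((k:ℝ)+1) ≠ 0 := by positivity
    field_simp
  have hge1 : (1:ℝ) ≤ θ*n/i := by
    rw [le_div_iff₀ hi0, one_mul, mul_comm θ n]
    calc (i:ℝ) ≤ θ * n := hiθ
      _ = n * θ := by ring
  have hpow1 : (1:ℝ) ≤ (θ*n/i)^k := one_le_pow₀ hge1
  calc ((n:ℝ)+2) ≤ (1+ε)*n := hNε
    _ ≤ (1+ε)*n * (θ*n/i)^k := by nlinarith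
    _ = (1+ε) * ((i:ℝ) * θ^k * ((n:ℝ)/i)^i) := by rw [hid]; ring
    _ ≤ (1+ε) * ((i:ℝ) * θ^k * (n.choose i : ℝ)) := by
        apply mul_le_mul_of_nonneg_left _ (by linarith)
        apply mul_le_mul_of_nonneg_left hC (by positivity)
    _ = (1+ε) * i * θ^(i-1) * (n.choose i) := by rw [hk1]; ring

lemma aux_sign_bounds (s : ℤ) (hs : s ≠ 0) :
    (1:ℝ) ≤ (|s| : ℝ) ∧ ((s.sign : ℝ) = 1 ∨ (s.sign : ℝ) = -1) := by
  constructor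
  · exact_mod_cast Int.one_le_abs (by omega)
  · rcases lt_trichotomy s 0 with h | h | h
    · right; rw [Int.sign_eq_neg_one_iff_neg.2 h]; norm_num
    · exact absurd h hs
    · left; rw [Int.sign_eq_one_iff_pos.2 h]; norm_num

lemma aux_w_nonneg (s : ℤ) (hs : s ≠ 0) (j : ℕ) (hj : 1 ≤ j) :
    0 ≤ (|s| : ℝ) * j - (s.sign : ℝ) := by
  obtain ⟨h1, h2⟩ := aux_sign_bounds s hs
  have hj' : (1:ℝ) ≤ j := by exact_mod_cast hj
  rcases h2 with h | h <;> rw [h] <;> nlinarith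

lemma aux_gamma_nonneg (s : ℤ) (hs : s ≠ 0) (p : ℕ → ℝ) (hp : ∀ k, 1 ≤ k → 0 ≤ p k)
    (γ : ℕ → ℝ)
    (hγ : ∀ n, 1 ≤ n → γ n = p n +
      ∑ j ∈ Finset.Ico 1 n, ((|s| : ℝ) * j - (s.sign : ℝ)) * γ j * γ (n - j)) :
    ∀ n, 1 ≤ n → 0 ≤ γ n := by
  intro n
  induction n using Nat.strong_induction_on with
  | _ n ih =>
    intro hn
    rw [hγ n hn]
    have h1 : 0 ≤ p n := hp n hn
    have h2 : 0 ≤ ∑ j ∈ Finset.Ico 1 n, ((|s| : ℝ) * j - (s.sign : ℝ)) * γ j * γ (n - j) := by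
      apply Finset.sum_nonneg
      intro j hj
      rw [Finset.mem_Ico] at hj
      have hγj := ih j hj.2 hj.1
      have hγnj := ih (n-j) (by omega) (by omega)
      have hw := aux_w_nonneg s hs j hj.1
      positivity
    linarith

lemma aux_a_nonneg (s : ℤ) (hs : s ≠ 0) (p : ℕ → ℝ) (hp : ∀ k, 1 ≤ k → 0 ≤ p k)
    (γ : ℕ → ℝ)
    (hγ : ∀ n, 1 ≤ n → γ n = p n +
      ∑ j ∈ Finset.Ico 1 n, ((|s| : ℝ) * j - (s.sign : ℝ)) * γ j * γ (n - j))
    (a : ℕ → ℝ) (ha : ∀ n, a n = if n = 0 then 0 else γ n / (Nat.factorial n)) :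
    ∀ n, 0 ≤ a n := by
  intro n
  rw [ha n]
  rcases Nat.eq_zero_or_pos n with h | h
  · simp [h]
  · rw [if_neg (by omega)]
    have := aux_gamma_nonneg s hs p hp γ hγ n h
    positivity

lemma aux_a_rec (s : ℤ) (hs : s ≠ 0) (p : ℕ → ℝ)
    (γ : ℕ → ℝ)
    (hγ : ∀ n, 1 ≤ n → γ n = p n +
      ∑ j ∈ Finset.Ico 1 n, ((|s| : ℝ) * j - (s.sign : ℝ)) * γ j * γ (n - j))
    (a : ℕ → ℝ) (ha : ∀ n, a n = if n = 0 then 0 else γ n / (Nat.factorial n)) :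
    ∀ n, 1 ≤ n → a n = p n / (Nat.factorial n) +
      ∑ j ∈ Finset.Ico 1 n, ((|s| : ℝ) * j - (s.sign : ℝ)) * a j * a (n - j) / (n.choose j) := by
  intro n hn
  rw [ha n, if_neg (by omega), hγ n hn, add_div, Finset.sum_div]
  congr 1
  apply Finset.sum_congr rfl
  intro j hj
  rw [Finset.mem_Ico] at hj
  have hj1 := hj.1
  have hjn := hj.2
  have haj : γ j = a j * (Nat.factorial j) := by
    rw [ha j, if_neg (by omega)]
    field_simp
  have hanj : γ (n-j) = a (n-j) * (Nat.factorial (n-j)) := by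
    rw [ha (n-j), if_neg (by omega)]
    field_simp
  rw [haj, hanj]
  have hch : ((n.choose j : ℝ)) * (Nat.factorial j) * (Nat.factorial (n-j)) = (Nat.factorial n) := by
    exact_mod_cast congrArg (Nat.cast (R := ℝ)) (Nat.choose_mul_factorial_mul_factorial (le_of_lt hjn))
  have hch0 : (0:ℝ) < (n.choose j : ℝ) := by
    exact_mod_cast Nat.choose_pos (le_of_lt hjn)
  have hfn : (0:ℝ) < (Nat.factorial n : ℝ) := by exact_mod_cast Nat.factorial_pos n
  rw [eq_div_iff (ne_of_gt hch0), div_mul_eq_mul_div, div_eq_iff (ne_of_gt hfn)]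
  rw [← hch]
  ring

lemma aux_summable_deriv (a : ℕ → ℝ) (ha0 : ∀ n, 0 ≤ a n) (r y : ℝ) (h0y : 0 ≤ y) (hyr : y < r)
    (hr : Summable fun n => a n * r^n) : Summable fun n : ℕ => (n:ℝ) * a n * y^(n-1) := by
  have hr0 : 0 < r := lt_of_le_of_lt h0y hyr
  set M := ∑' n, a n * r^n with hM
  have hbound : ∀ n, a n * r^n ≤ M :=
    fun n => Summable.le_tsum hr n (fun m _ => mul_nonneg (ha0 m) (by positivity))
  have ht : y / r < 1 := (div_lt_one hr0).2 hyr
  have ht0 : 0 ≤ y / r := by positivity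
  have hgeo : Summable (fun n : ℕ => ((n:ℝ)+1) * (y/r)^n) := by
    have h1 : Summable (fun n : ℕ => (n:ℝ)^1 * (y/r)^n) :=
      summable_pow_mul_geometric_of_norm_lt_one 1 (by rw [Real.norm_eq_abs, abs_of_nonneg ht0]; exact ht)
    have h2 : Summable (fun n : ℕ => (y/r)^n) := summable_geometric_of_lt_one ht0 ht
    have := h1.add h2
    apply this.congr
    intro n; simp [pow_one]; ring
  have hgeo' : Summable (fun n : ℕ => (M/r) * (((n:ℝ)+1) * (y/r)^n)) := hgeo.mul_left _
  have hshift : Summable (fun n : ℕ => (M/r) * ((((n+1):ℕ):ℝ) * (y/r)^((n+1)-1))) := by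
    apply hgeo'.congr
    intro n
    congr 1
    push_cast
    norm_num
  have hfull : Summable (fun n : ℕ => (M/r) * ((n:ℝ) * (y/r)^(n-1))) := by
    rw [← summable_nat_add_iff 1]
    exact hshift
  apply Summable.of_nonneg_of_le _ _ hfull
  · intro n
    have := ha0 n
    positivity
  · intro n
    rcases Nat.eq_zero_or_pos n with h | h
    · subst h; simp
    · have hMn : 0 ≤ M := le_trans (mul_nonneg (ha0 0) (by positivity) : (0:ℝ) ≤ a 0 * r^0) (by simpa using hbound 0)
      have han : a n ≤ M / r^n := by
        rw [le_div_iff₀ (by positivity)]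
        exact hbound n
      have hy' : (0:ℝ) ≤ y^(n-1) := by positivity
      calc (n:ℝ) * a n * y^(n-1) ≤ (n:ℝ) * (M / r^n) * y^(n-1) := by
            apply mul_le_mul_of_nonneg_right _ hy'
            exact mul_le_mul_of_nonneg_left han (by positivity)
        _ = (M/r) * ((n:ℝ) * (y/r)^(n-1)) := by
            rw [div_pow]
            have hrn : r^n = r^(n-1) * r := by
              rw [← pow_succ]; congr 1; omega
            rw [hrn]
            field_simp

lemma aux_coeff (s : ℤ) (hs : s ≠ 0) (p : ℕ → ℝ) (a : ℕ → ℝ)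
    (ha0 : ∀ n, 0 ≤ a n)
    (hrec : ∀ n, 1 ≤ n → a n = p n / (Nat.factorial n) +
      ∑ j ∈ Finset.Ico 1 n, ((|s| : ℝ) * j - (s.sign : ℝ)) * a j * a (n - j) / (n.choose j))
    (θ ε : ℝ) (hθ0 : 0 < θ) (hθh : θ < 1/2) (hε : 0 < ε)
    (n : ℕ) (hn1 : 1 ≤ n)
    (hNε : (n:ℝ)+2 ≤ (1+ε)*n)
    (hNu : ((n:ℝ)+1) * Real.exp ((1-θ) * Real.log (1-θ)) ^ n ≤ 1) :
    a n ≤ p n / (Nat.factorial n)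
      + (|s|:ℝ)*(1+ε) * ∑ i ∈ Finset.range (n+1), (i:ℝ) * a i * a (n-i) * θ^(i-1)
      + (|s|:ℝ) * (∑ i ∈ Finset.range (n+1), (1+((n-i:ℕ):ℝ)) * (a i * a (n-i))) * (Real.rpow θ θ)^n := by
  classical
  obtain ⟨hs1, hsgn⟩ := aux_sign_bounds s hs
  set w : ℕ → ℝ := fun j => (|s|:ℝ)*j - (s.sign : ℝ) with hw
  set B : ℕ → ℝ := fun j => w j * a j * a (n-j) / (n.choose j) with hB
  have hwle : ∀ j : ℕ, w j ≤ (|s|:ℝ) * (1 + j) := by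
    intro j
    rw [hw]; simp only []
    rcases hsgn with h | h <;> rw [h] <;> nlinarith
  have hBnn : ∀ j, 1 ≤ j → j < n → 0 ≤ B j := by
    intro j h1 h2
    have hwj : 0 ≤ w j := by
      rw [hw]; simp only []
      have : (1:ℝ) ≤ j := by exact_mod_cast h1
      rcases hsgn with h | h <;> rw [h] <;> nlinarith
    have hc : (0:ℝ) ≤ (n.choose j : ℝ) := by positivity
    have := ha0 j; have := ha0 (n-j)
    rw [hB]; positivity
  set q1 : ℕ → Prop := fun j => (j:ℝ) ≤ θ*n with hq1
  set q3 : ℕ → Prop := fun j => ((n-j:ℕ):ℝ) ≤ θ*n with hq3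
  set T := Finset.Ico 1 n with hT
  set S1 := T.filter q1 with hS1
  set S3 := (T.filter (fun j => ¬ q1 j)).filter q3 with hS3
  set S2 := (T.filter (fun j => ¬ q1 j)).filter (fun j => ¬ q3 j) with hS2
  have hsplit : ∑ j ∈ T, B j = ∑ j ∈ S1, B j + (∑ j ∈ S3, B j + ∑ j ∈ S2, B j) := by
    rw [hS1, hS3, hS2, Finset.sum_filter_add_sum_filter_not (T.filter (fun j => ¬ q1 j)) q3 B,
      Finset.sum_filter_add_sum_filter_not T q1 B]
  -- membership facts
  have hmemT : ∀ j ∈ T, 1 ≤ j ∧ j < n := by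
    intro j hj; rw [hT, Finset.mem_Ico] at hj; exact hj
  -- not both q1 j and q3 j
  have hnotboth : ∀ j ∈ T, q1 j → ¬ q3 j := by
    intro j hj h1 h3
    obtain ⟨hj1, hjn⟩ := hmemT j hj
    rw [hq1] at h1; rw [hq3] at h3
    have hc : ((n-j:ℕ):ℝ) = (n:ℝ) - j := by rw [Nat.cast_sub (le_of_lt hjn)]
    rw [hc] at h3
    have hn0 : (1:ℝ) ≤ (n:ℝ) := by exact_mod_cast hn1
    nlinarith
  -- reflection bijection between S3 and S1
  have hrefl : ∑ j ∈ S3, B j = ∑ i ∈ S1, B (n-i) := by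
    apply Finset.sum_nbij' (i := fun j => n - j) (j := fun i => n - i)
    · intro j hj
      rw [hS3, Finset.mem_filter, Finset.mem_filter] at hj
      obtain ⟨⟨hjT, hnq1⟩, hq3j⟩ := hj
      obtain ⟨hj1, hjn⟩ := hmemT j hjT
      rw [hS1, Finset.mem_filter]
      constructor
      · rw [hT, Finset.mem_Ico]; omega
      · exact hq3j
    · intro i hi
      rw [hS1, Finset.mem_filter] at hi
      obtain ⟨hiT, hq1i⟩ := hi
      obtain ⟨hi1, hin⟩ := hmemT i hiT
      rw [hS3, Finset.mem_filter, Finset.mem_filter]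
      refine ⟨⟨?_, ?_⟩, ?_⟩
      · rw [hT, Finset.mem_Ico]; omega
      · -- ¬ q1 (n-i) : ¬ ((n-i:ℝ) ≤ θ n)
        intro hcon
        rw [hq1] at hcon hq1i
        have hc : ((n-i:ℕ):ℝ) = (n:ℝ) - i := by rw [Nat.cast_sub (le_of_lt hin)]
        rw [hc] at hcon
        have hn0 : (1:ℝ) ≤ (n:ℝ) := by exact_mod_cast hn1
        nlinarith
      · show ((n - (n - i):ℕ):ℝ) ≤ θ * n
        rw [show n - (n - i) = i from by omega]
        exact hq1i
    · intro j hj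
      rw [hS3, Finset.mem_filter, Finset.mem_filter] at hj
      obtain ⟨⟨hjT, _⟩, _⟩ := hj
      obtain ⟨hj1, hjn⟩ := hmemT j hjT
      omega
    · intro i hi
      rw [hS1, Finset.mem_filter] at hi
      obtain ⟨hiT, _⟩ := hi
      obtain ⟨hi1, hin⟩ := hmemT i hiT
      omega
    · intro j hj
      rw [hS3, Finset.mem_filter, Finset.mem_filter] at hj
      obtain ⟨⟨hjT, _⟩, _⟩ := hj
      obtain ⟨hj1, hjn⟩ := hmemT j hjT
      rw [show n - (n - j) = j from by omega]
  -- bound on S1 pairs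
  have hq0 : (0:ℝ) < Real.rpow θ θ := Real.rpow_pos_of_pos hθ0 θ
  set E1t : ℕ → ℝ := fun i => (|s|:ℝ)*(1+ε) * ((i:ℝ) * a i * a (n-i) * θ^(i-1)) with hE1t
  set E2t : ℕ → ℝ := fun i => (|s|:ℝ) * ((1+((n-i:ℕ):ℝ)) * (a i * a (n-i))) * (Real.rpow θ θ)^n with hE2t
  have hS1bound : ∀ i ∈ S1, B i + B (n-i) ≤ E1t i := by
    intro i hi
    rw [hS1, Finset.mem_filter] at hi
    obtain ⟨hiT, hq1i⟩ := hi
    obtain ⟨hi1, hin⟩ := hmemT i hiT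
    have hC0 : (0:ℝ) < (n.choose i : ℝ) := by exact_mod_cast Nat.choose_pos (le_of_lt hin)
    have hsym : n.choose (n - i) = n.choose i := Nat.choose_symm (le_of_lt hin)
    have hnni : n - (n - i) = i := by omega
    have hBsum : B i + B (n-i) = (w i + w (n-i)) * (a i * a (n-i)) / (n.choose i : ℝ) := by
      rw [hB]; simp only []
      rw [hsym, hnni]
      field_simp
    have hA : 0 ≤ a i * a (n-i) := mul_nonneg (ha0 i) (ha0 (n-i))
    have hwsum : w i + w (n-i) ≤ (|s|:ℝ) * ((n:ℝ)+2) := by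
      rw [hw]; simp only []
      have hcast : ((n-i:ℕ):ℝ) = (n:ℝ) - i := by rw [Nat.cast_sub (le_of_lt hin)]
      rw [hcast]
      rcases hsgn with h | h <;> rw [h] <;> nlinarith
    have hts := aux_T1_scalar θ ε hθ0 hε n i hi1 hin hq1i hNε
    rw [hBsum, div_le_iff₀ hC0, hE1t]
    calc (w i + w (n-i)) * (a i * a (n-i))
        ≤ ((|s|:ℝ) * ((n:ℝ)+2)) * (a i * a (n-i)) := mul_le_mul_of_nonneg_right hwsum hA
      _ ≤ ((|s|:ℝ) * ((1+ε) * i * θ^(i-1) * (n.choose i))) * (a i * a (n-i)) := by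
          apply mul_le_mul_of_nonneg_right _ hA
          exact mul_le_mul_of_nonneg_left hts (by linarith)
      _ = (|s|:ℝ)*(1+ε) * ((i:ℝ) * a i * a (n-i) * θ^(i-1)) * (n.choose i) := by ring
  have hS2bound : ∀ j ∈ S2, B j ≤ (|s|:ℝ) * ((1+(j:ℝ)) * (a j * a (n-j))) * (Real.rpow θ θ)^n := by
    intro j hj
    rw [hS2, Finset.mem_filter, Finset.mem_filter] at hj
    obtain ⟨⟨hjT, hnq1⟩, hnq3⟩ := hj
    obtain ⟨hj1, hjn⟩ := hmemT j hjT
    have hnq1' : θ * n < (j:ℝ) := not_le.1 hnq1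
    have hnq3' : θ * n < ((n-j:ℕ):ℝ) := not_le.1 hnq3
    have hC0 : (0:ℝ) < (n.choose j : ℝ) := by exact_mod_cast Nat.choose_pos (le_of_lt hjn)
    have hce := aux_choose_entropy θ hθ0 hθh n j hj1 hjn hnq1' hnq3' hNu
    have hA : 0 ≤ a j * a (n-j) := mul_nonneg (ha0 j) (ha0 (n-j))
    have hwj := hwle j
    have hX : 0 ≤ (|s|:ℝ) * ((1+(j:ℝ)) * (a j * a (n-j))) := by
      have h0s : (0:ℝ) ≤ (|s|:ℝ) := by linarith
      positivity
    rw [hB]; simp only []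
    rw [div_le_iff₀ hC0]
    calc w j * a j * a (n-j) ≤ ((|s|:ℝ) * (1+(j:ℝ))) * (a j * a (n-j)) := by
          have := mul_le_mul_of_nonneg_right hwj hA
          calc w j * a j * a (n-j) = w j * (a j * a (n-j)) := by ring
            _ ≤ ((|s|:ℝ) * (1+(j:ℝ))) * (a j * a (n-j)) := this
      _ = ((|s|:ℝ) * ((1+(j:ℝ)) * (a j * a (n-j)))) * 1 := by ring
      _ ≤ ((|s|:ℝ) * ((1+(j:ℝ)) * (a j * a (n-j)))) * ((n.choose j : ℝ) * (Real.rpow θ θ)^n) := by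
          exact mul_le_mul_of_nonneg_left hce hX
      _ = (|s|:ℝ) * ((1+(j:ℝ)) * (a j * a (n-j))) * (Real.rpow θ θ)^n * (n.choose j) := by ring
  -- reindex S2 bound sum
  have hS2refl : ∑ j ∈ S2, (|s|:ℝ) * ((1+(j:ℝ)) * (a j * a (n-j))) * (Real.rpow θ θ)^n
      = ∑ i ∈ S2, E2t i := by
    apply Finset.sum_nbij' (i := fun j => n - j) (j := fun i => n - i)
    · intro j hj
      rw [hS2, Finset.mem_filter, Finset.mem_filter] at hj ⊢
      obtain ⟨⟨hjT, hnq1⟩, hnq3⟩ := hj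
      obtain ⟨hj1, hjn⟩ := hmemT j hjT
      refine ⟨⟨?_, ?_⟩, ?_⟩
      · rw [hT, Finset.mem_Ico]; omega
      · intro hcon
        apply hnq3
        exact hcon
      · intro hcon
        apply hnq1
        have hcon' : ((n - (n - j):ℕ):ℝ) ≤ θ * n := hcon
        rw [show n - (n - j) = j from by omega] at hcon'
        exact hcon'
    · intro i hi
      rw [hS2, Finset.mem_filter, Finset.mem_filter] at hi ⊢
      obtain ⟨⟨hiT, hnq1⟩, hnq3⟩ := hi
      obtain ⟨hi1, hin⟩ := hmemT i hiT
      refine ⟨⟨?_, ?_⟩, ?_⟩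
      · rw [hT, Finset.mem_Ico]; omega
      · exact hnq3
      · intro hcon
        apply hnq1
        have hcon' : ((n - (n - i):ℕ):ℝ) ≤ θ * n := hcon
        rw [show n - (n - i) = i from by omega] at hcon'
        exact hcon'
    · intro j hj
      rw [hS2, Finset.mem_filter, Finset.mem_filter] at hj
      obtain ⟨⟨hjT, _⟩, _⟩ := hj
      obtain ⟨hj1, hjn⟩ := hmemT j hjT
      omega
    · intro i hi
      rw [hS2, Finset.mem_filter, Finset.mem_filter] at hi
      obtain ⟨⟨hiT, _⟩, _⟩ := hi
      obtain ⟨hi1, hin⟩ := hmemT i hiT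
      omega
    · intro j hj
      rw [hS2, Finset.mem_filter, Finset.mem_filter] at hj
      obtain ⟨⟨hjT, _⟩, _⟩ := hj
      obtain ⟨hj1, hjn⟩ := hmemT j hjT
      rw [hE2t]; simp only []
      rw [show n - (n - j) = j from by omega]
      push_cast [Nat.cast_sub (le_of_lt hjn)]
      ring
  -- extension to range (n+1)
  have h0s : (0:ℝ) ≤ (|s|:ℝ) := by linarith
  have hE1nn : ∀ i, 0 ≤ E1t i := by
    intro i
    show (0:ℝ) ≤ (|s|:ℝ)*(1+ε) * ((i:ℝ) * a i * a (n-i) * θ^(i-1))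
    have h1 := ha0 i; have h2 := ha0 (n-i)
    have hθ' : (0:ℝ) ≤ θ := le_of_lt hθ0
    apply mul_nonneg (by nlinarith)
    apply mul_nonneg (mul_nonneg (mul_nonneg (by positivity) h1) h2) (pow_nonneg hθ' _)
  have hE2nn : ∀ i, 0 ≤ E2t i := by
    intro i
    show (0:ℝ) ≤ (|s|:ℝ) * ((1+((n-i:ℕ):ℝ)) * (a i * a (n-i))) * (Real.rpow θ θ)^n
    have h1 := ha0 i; have h2 := ha0 (n-i)
    have h3 : (0:ℝ) ≤ 1 + ((n-i:ℕ):ℝ) := by positivity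
    apply mul_nonneg (mul_nonneg h0s (mul_nonneg h3 (mul_nonneg h1 h2))) (pow_nonneg (le_of_lt hq0) _)
  have hsub1 : S1 ⊆ Finset.range (n+1) := by
    intro i hi
    rw [hS1, Finset.mem_filter] at hi
    obtain ⟨hiT, _⟩ := hi
    obtain ⟨_, hin⟩ := hmemT i hiT
    rw [Finset.mem_range]; omega
  have hsub2 : S2 ⊆ Finset.range (n+1) := by
    intro i hi
    rw [hS2, Finset.mem_filter, Finset.mem_filter] at hi
    obtain ⟨⟨hiT, _⟩, _⟩ := hi
    obtain ⟨_, hin⟩ := hmemT i hiT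
    rw [Finset.mem_range]; omega
  -- final assembly
  have hrec' := hrec n hn1
  have hchain : ∑ j ∈ T, B j ≤ ∑ i ∈ Finset.range (n+1), E1t i + ∑ i ∈ Finset.range (n+1), E2t i := by
    rw [hsplit, hrefl]
    have c1 : ∑ i ∈ S1, B i + ∑ i ∈ S1, B (n-i) = ∑ i ∈ S1, (B i + B (n-i)) :=
      (Finset.sum_add_distrib).symm
    calc ∑ i ∈ S1, B i + (∑ i ∈ S1, B (n-i) + ∑ j ∈ S2, B j)
        = ∑ i ∈ S1, (B i + B (n-i)) + ∑ j ∈ S2, B j := by rw [← c1]; ring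
      _ ≤ ∑ i ∈ S1, E1t i + ∑ j ∈ S2, ((|s|:ℝ) * ((1+(j:ℝ)) * (a j * a (n-j))) * (Real.rpow θ θ)^n) := by
          apply add_le_add (Finset.sum_le_sum hS1bound) (Finset.sum_le_sum hS2bound)
      _ = ∑ i ∈ S1, E1t i + ∑ i ∈ S2, E2t i := by rw [hS2refl]
      _ ≤ ∑ i ∈ Finset.range (n+1), E1t i + ∑ i ∈ Finset.range (n+1), E2t i := by
          apply add_le_add
          · exact Finset.sum_le_sum_of_subset_of_nonneg hsub1 (fun i _ _ => hE1nn i)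
          · exact Finset.sum_le_sum_of_subset_of_nonneg hsub2 (fun i _ _ => hE2nn i)
  have hE1sum : ∑ i ∈ Finset.range (n+1), E1t i
      = (|s|:ℝ)*(1+ε) * ∑ i ∈ Finset.range (n+1), (i:ℝ) * a i * a (n-i) * θ^(i-1) := by
    rw [Finset.mul_sum]
  have hE2sum : ∑ i ∈ Finset.range (n+1), E2t i
      = (|s|:ℝ) * (∑ i ∈ Finset.range (n+1), (1+((n-i:ℕ):ℝ)) * (a i * a (n-i))) * (Real.rpow θ θ)^n := by
    rw [Finset.mul_sum, Finset.sum_mul]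
  calc a n = p n / (Nat.factorial n) + ∑ j ∈ T, B j := hrec'
    _ ≤ p n / (Nat.factorial n) + (∑ i ∈ Finset.range (n+1), E1t i + ∑ i ∈ Finset.range (n+1), E2t i) := by
        linarith [hchain]
    _ = p n / (Nat.factorial n)
      + (|s|:ℝ)*(1+ε) * ∑ i ∈ Finset.range (n+1), (i:ℝ) * a i * a (n-i) * θ^(i-1)
      + (|s|:ℝ) * (∑ i ∈ Finset.range (n+1), (1+((n-i:ℕ):ℝ)) * (a i * a (n-i))) * (Real.rpow θ θ)^n := by
        rw [hE1sum, hE2sum]; ring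

/-- For every `0 < θ < 1/e` and `ε > 0` there is a polynomial `P_ε` with nonnegative
coefficients such that for `0 < x < ρ_a`,
`A(x) ≤ f(x) + |s|(1+ε)·x·A′(θx)·A(x) + |s|·(A(θ^θ x)² + θ^θ·x·A(θ^θ x)·A′(θ^θ x)) + P_ε(x)`,
where `A′` is the termwise derivative of `A`. -/
theorem A_bound
    (s : ℤ) (hs : s ≠ 0)
    (p : ℕ → ℝ) (hp : ∀ k, 1 ≤ k → 0 ≤ p k)
    (ρ : ℝ≥0∞)
    (hρ : ρ = seriesRadius fun k => if k = 0 then 0 else p k / (Nat.factorial k))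
    (hρ0 : 0 < ρ)
    (hf : ∃ k, 1 ≤ k ∧ p k ≠ 0)
    (γ : ℕ → ℝ)
    (hγ : ∀ n, 1 ≤ n → γ n = p n +
      ∑ j ∈ Finset.Ico 1 n, ((|s| : ℝ) * j - (s.sign : ℝ)) * γ j * γ (n - j))
    (a : ℕ → ℝ) (ha : ∀ n, a n = if n = 0 then 0 else γ n / (Nat.factorial n))
    (ρa : ℝ≥0∞) (hρa : ρa = seriesRadius a) :
    ∀ θ ε : ℝ, 0 < θ → θ < 1 / Real.exp 1 → 0 < ε →
      ∃ P : Polynomial ℝ, (∀ i, 0 ≤ P.coeff i) ∧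
        ∀ x : ℝ, 0 < x → ENNReal.ofReal x < ρa →
          (∑' n, a n * x ^ n) ≤
            (∑' k, (if k = 0 then 0 else p k / (Nat.factorial k)) * x ^ k)
            + (|s| : ℝ) * (1 + ε) * x * (∑' n : ℕ, (n : ℝ) * a n * (θ * x) ^ (n - 1))
                * (∑' n, a n * x ^ n)
            + (|s| : ℝ) * ((∑' n, a n * (Real.rpow θ θ * x) ^ n) ^ 2
                + Real.rpow θ θ * x * (∑' n, a n * (Real.rpow θ θ * x) ^ n)
                  * (∑' n : ℕ, (n : ℝ) * a n * (Real.rpow θ θ * x) ^ (n - 1)))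
            + P.eval x := by
  intro θ ε hθ0 hθe hε
  classical
  have ha0 : ∀ n, 0 ≤ a n := aux_a_nonneg s hs p hp γ hγ a ha
  have hrec := aux_a_rec s hs p γ hγ a ha
  have he1 : (2:ℝ) < Real.exp 1 := by
    have := Real.exp_one_gt_d9; linarith
  have hθh : θ < 1/2 := by
    apply lt_trans hθe
    rw [div_lt_div_iff₀ (Real.exp_pos 1) (by norm_num)]
    linarith
  have hθ1 : θ < 1 := by linarith
  have hq0 : 0 < Real.rpow θ θ := Real.rpow_pos_of_pos hθ0 θ
  have hq1 : Real.rpow θ θ < 1 := Real.rpow_lt_one (le_of_lt hθ0) hθ1 hθ0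
  set u := Real.exp ((1-θ)*Real.log (1-θ)) with hu
  have hu0 : 0 < u := Real.exp_pos _
  have hu1 : u < 1 := by
    rw [hu, Real.exp_lt_one_iff]
    have hl : Real.log (1-θ) < 0 := Real.log_neg (by linarith) (by linarith)
    exact mul_neg_of_pos_of_neg (by linarith) hl
  -- choose N
  have hsm : Summable (fun n : ℕ => ((n:ℝ)+1) * u^n) := by
    have h1 : Summable (fun n : ℕ => (n:ℝ)^1 * u^n) :=
      summable_pow_mul_geometric_of_norm_lt_one 1 (by rw [Real.norm_eq_abs, abs_of_nonneg (le_of_lt hu0)]; exact hu1)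
    have h2 : Summable (fun n : ℕ => u^n) := summable_geometric_of_lt_one (le_of_lt hu0) hu1
    apply (h1.add h2).congr
    intro n; simp [pow_one]; ring
  have hev : ∀ᶠ n : ℕ in Filter.atTop, ((n:ℝ)+1)*u^n < 1 := by
    have h := hsm.tendsto_atTop_zero
    exact h.eventually_lt_const (by norm_num)
  obtain ⟨N₁, hN₁⟩ := Filter.eventually_atTop.1 hev
  set N₂ := ⌈2/ε⌉₊ with hN₂
  set N := max N₁ N₂ with hN
  have hNprop : ∀ n : ℕ, N < n → ((n:ℝ)+2 ≤ (1+ε)*n ∧ ((n:ℝ)+1)*u^n ≤ 1) := by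
    intro n hn
    constructor
    · have h2ε : 2/ε ≤ (N₂:ℝ) := Nat.le_ceil _
      have hn2 : (N₂:ℝ) ≤ (n:ℝ) := by
        have : N₂ ≤ n := by omega
        exact_mod_cast this
      have h2 : 2/ε ≤ (n:ℝ) := le_trans h2ε hn2
      rw [div_le_iff₀ hε] at h2
      nlinarith
    · exact le_of_lt (hN₁ n (by omega))
  set P : Polynomial ℝ := ∑ n ∈ Finset.range (N+1), Polynomial.C (a n) * Polynomial.X ^ n with hP
  refine ⟨P, ?_, ?_⟩
  · intro i
    rw [hP, Polynomial.finset_sum_coeff]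
    apply Finset.sum_nonneg
    intro n _
    rw [Polynomial.coeff_C_mul, Polynomial.coeff_X_pow]
    by_cases hni : i = n
    · simp [hni, ha0 n]
    · simp [Ne.symm hni, hni]
  intro x hx0 hxρ
  -- extract radius
  rw [hρa] at hxρ
  unfold seriesRadius at hxρ
  rw [lt_iSup_iff] at hxρ
  obtain ⟨r, hr⟩ := hxρ
  rw [lt_iSup_iff] at hr
  obtain ⟨hsumr, hxr'⟩ := hr
  have hxr : x < (r:ℝ) := by
    rw [← ENNReal.ofReal_coe_nnreal] at hxr'
    exact (ENNReal.ofReal_lt_ofReal_iff_of_nonneg (le_of_lt hx0)).1 hxr'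
  have hsumr' : Summable (fun n => a n * (r:ℝ)^n) :=
    hsumr.congr (fun n => by rw [abs_of_nonneg (ha0 n)])
  have h0s : (0:ℝ) ≤ (|s|:ℝ) := by exact_mod_cast abs_nonneg s
  set q : ℝ := Real.rpow θ θ with hqdef
  have hθx0 : (0:ℝ) ≤ θ*x := by positivity
  have hθxr : θ*x < r := by nlinarith
  have hqx0 : (0:ℝ) ≤ q*x := by positivity
  have hqxr : q*x < r := by nlinarith
  have hxrle : x ≤ (r:ℝ) := le_of_lt hxr
  -- summabilities
  have hax : Summable (fun n => a n * x^n) := by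
    apply Summable.of_nonneg_of_le _ _ hsumr'
    · intro n; have := ha0 n; positivity
    · intro n
      exact mul_le_mul_of_nonneg_left (pow_le_pow_left₀ (le_of_lt hx0) hxrle n) (ha0 n)
  have hag2 : Summable (fun n => a n * (q*x)^n) := by
    apply Summable.of_nonneg_of_le _ _ hsumr'
    · intro n; have := ha0 n; positivity
    · intro n
      exact mul_le_mul_of_nonneg_left (pow_le_pow_left₀ hqx0 (le_of_lt hqxr) n) (ha0 n)
  have he1s : Summable (fun n : ℕ => (n:ℝ) * a n * (θ*x)^(n-1)) :=
    aux_summable_deriv a ha0 r (θ*x) hθx0 hθxr hsumr'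
  have hh2s : Summable (fun n : ℕ => (n:ℝ) * a n * (q*x)^(n-1)) :=
    aux_summable_deriv a ha0 r (q*x) hqx0 hqxr hsumr'
  set c1 : ℝ := (|s|:ℝ)*(1+ε)*x with hc1
  have hc10 : 0 ≤ c1 := by rw [hc1]; positivity
  set f1 : ℕ → ℝ := fun i => c1 * ((i:ℝ) * a i * (θ*x)^(i-1)) with hf1def
  set g : ℕ → ℝ := fun m => a m * x^m with hgdef
  set g2 : ℕ → ℝ := fun m => a m * (q*x)^m with hg2def
  set h2 : ℕ → ℝ := fun m => (m:ℝ) * a m * (q*x)^(m-1) with hh2def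
  have hf1s : Summable f1 := he1s.mul_left c1
  have hf10 : ∀ n, 0 ≤ f1 n := by
    intro n; rw [hf1def]
    have := ha0 n; positivity
  have hg0 : ∀ n, 0 ≤ g n := by
    intro n; rw [hgdef]; have := ha0 n; positivity
  have hg20 : ∀ n, 0 ≤ g2 n := by
    intro n; rw [hg2def]; have := ha0 n; positivity
  have hh20 : ∀ n, 0 ≤ h2 n := by
    intro n; rw [hh2def]; have := ha0 n; positivity
  have hnorm : ∀ (f : ℕ → ℝ), (∀ n, 0 ≤ f n) → Summable f → Summable (fun n => ‖f n‖) := by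
    intro f hf0 hf
    apply hf.congr
    intro n; rw [Real.norm_eq_abs, abs_of_nonneg (hf0 n)]
  -- Cauchy products
  have hD1eq := tsum_mul_tsum_eq_tsum_sum_antidiagonal_of_summable_norm
    (hnorm f1 hf10 hf1s) (hnorm g hg0 hax)
  have hD1sm : Summable (fun n => ∑ kl ∈ Finset.HasAntidiagonal.antidiagonal n, f1 kl.1 * g kl.2) :=
    (summable_norm_sum_mul_antidiagonal_of_summable_norm (hnorm f1 hf10 hf1s) (hnorm g hg0 hax)).of_norm
  have hGGeq := tsum_mul_tsum_eq_tsum_sum_antidiagonal_of_summable_norm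
    (hnorm g2 hg20 hag2) (hnorm g2 hg20 hag2)
  have hGGsm : Summable (fun n => ∑ kl ∈ Finset.HasAntidiagonal.antidiagonal n, g2 kl.1 * g2 kl.2) :=
    (summable_norm_sum_mul_antidiagonal_of_summable_norm (hnorm g2 hg20 hag2) (hnorm g2 hg20 hag2)).of_norm
  have hGHeq := tsum_mul_tsum_eq_tsum_sum_antidiagonal_of_summable_norm
    (hnorm g2 hg20 hag2) (hnorm h2 hh20 hh2s)
  have hGHsm : Summable (fun n => ∑ kl ∈ Finset.HasAntidiagonal.antidiagonal n, g2 kl.1 * h2 kl.2) :=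
    (summable_norm_sum_mul_antidiagonal_of_summable_norm (hnorm g2 hg20 hag2) (hnorm h2 hh20 hh2s)).of_norm
  set D1 : ℕ → ℝ := fun n => ∑ kl ∈ Finset.HasAntidiagonal.antidiagonal n, f1 kl.1 * g kl.2 with hD1def
  set D2 : ℕ → ℝ := fun n => (|s|:ℝ) * ((∑ kl ∈ Finset.HasAntidiagonal.antidiagonal n, g2 kl.1 * g2 kl.2)
      + (q*x) * (∑ kl ∈ Finset.HasAntidiagonal.antidiagonal n, g2 kl.1 * h2 kl.2)) with hD2def
  have hD2sm : Summable D2 := (hGGsm.add (hGHsm.mul_left (q*x))).mul_left ((|s|:ℝ))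
  set pcx : ℕ → ℝ := fun k => (if k = 0 then 0 else p k / (Nat.factorial k)) * x^k with hpcxdef
  have hpc0 : ∀ k, 0 ≤ pcx k := by
    intro k
    show (0:ℝ) ≤ (if k = 0 then 0 else p k / (Nat.factorial k)) * x^k
    rcases Nat.eq_zero_or_pos k with h | h
    · simp [h]
    · rw [if_neg (by omega)]
      have := hp k h
      positivity
  have hpcle : ∀ k, pcx k ≤ a k * x^k := by
    intro k
    show (if k = 0 then 0 else p k / (Nat.factorial k)) * x^k ≤ a k * x^k
    rcases Nat.eq_zero_or_pos k with h | h
    · subst h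
      norm_num
      exact ha0 0
    · rw [if_neg (by omega : ¬ k = 0)]
      apply mul_le_mul_of_nonneg_right _ (by positivity)
      rw [hrec k h]
      have hB : 0 ≤ ∑ j ∈ Finset.Ico 1 k, ((|s| : ℝ) * j - (s.sign : ℝ)) * a j * a (k - j) / (k.choose j) := by
        apply Finset.sum_nonneg
        intro j hj
        rw [Finset.mem_Ico] at hj
        have hw := aux_w_nonneg s hs j hj.1
        have := ha0 j; have := ha0 (k-j)
        positivity
      linarith
  have hpcs : Summable pcx := by
    apply Summable.of_nonneg_of_le hpc0 hpcle hax
  set it : ℕ → ℝ := fun n => if n ≤ N then a n * x^n else 0 with hitdef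
  have hits : Summable it := by
    apply summable_of_ne_finset_zero (s := Finset.range (N+1))
    intro n hn
    rw [Finset.mem_range] at hn
    show (if n ≤ N then a n * x^n else 0) = 0
    rw [if_neg (by omega)]
  have hitnn : ∀ n, 0 ≤ it n := by
    intro n
    show (0:ℝ) ≤ (if n ≤ N then a n * x^n else 0)
    split
    · have := ha0 n; positivity
    · exact le_refl 0
  -- nonnegativity of D1 D2
  have hD1nn : ∀ n, 0 ≤ D1 n := by
    intro n; rw [hD1def]
    apply Finset.sum_nonneg
    intro kl _
    exact mul_nonneg (hf10 kl.1) (hg0 kl.2)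
  have hD2nn : ∀ n, 0 ≤ D2 n := by
    intro n; rw [hD2def]
    apply mul_nonneg h0s
    apply add_nonneg
    · exact Finset.sum_nonneg (fun kl _ => mul_nonneg (hg20 kl.1) (hg20 kl.2))
    · exact mul_nonneg hqx0 (Finset.sum_nonneg (fun kl _ => mul_nonneg (hg20 kl.1) (hh20 kl.2)))
  -- key termwise estimate
  have key : ∀ n, a n * x^n ≤ pcx n + D1 n + D2 n + it n := by
    intro n
    by_cases hn : n ≤ N
    · have hit : it n = a n * x^n := by
        show (if n ≤ N then a n * x^n else 0) = a n * x^n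
        rw [if_pos hn]
      rw [hit]
      have := hpc0 n; have := hD1nn n; have := hD2nn n
      linarith
    · push_neg at hn
      have hit : it n = 0 := by
        show (if n ≤ N then a n * x^n else 0) = 0
        rw [if_neg (by omega)]
      obtain ⟨hc1', hc2'⟩ := hNprop n hn
      have hn1 : 1 ≤ n := by omega
      have hco := aux_coeff s hs p a ha0 hrec θ ε hθ0 hθh hε n hn1 hc1' hc2'
      have hxn : (0:ℝ) < x^n := by positivity
      have hmul := mul_le_mul_of_nonneg_right hco (le_of_lt hxn)
      have hD1n : D1 n = ((|s|:ℝ)*(1+ε) * ∑ i ∈ Finset.range (n+1), (i:ℝ) * a i * a (n-i) * θ^(i-1)) * x^n := by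
        rw [hD1def]; simp only []
        rw [Finset.Nat.sum_antidiagonal_eq_sum_range_succ_mk, Finset.mul_sum, Finset.sum_mul]
        apply Finset.sum_congr rfl
        intro i hi
        rw [Finset.mem_range] at hi
        have hin : i ≤ n := by omega
        rcases Nat.eq_zero_or_pos i with h0 | h0
        · subst h0
          have hf0 : f1 0 = 0 := by
            show c1 * (((0:ℕ):ℝ) * a 0 * (θ*x)^(0-1)) = 0
            simp
          rw [hf0]
          simp
        · have hsplit : (θ*x)^(i-1) = θ^(i-1) * x^(i-1) := mul_pow θ x (i-1)
          have hxp : x^(i-1) * x^(n-i) * x = x^n := by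
            rw [← pow_add, ← pow_succ]
            congr 1; omega
          rw [hf1def, hgdef, hc1]; simp only []
          rw [hsplit, ← hxp]
          ring
      have hD2n : D2 n = ((|s|:ℝ) * (∑ i ∈ Finset.range (n+1), (1+((n-i:ℕ):ℝ)) * (a i * a (n-i))) * q^n) * x^n := by
        rw [hD2def]; simp only []
        rw [Finset.Nat.sum_antidiagonal_eq_sum_range_succ_mk,
          Finset.Nat.sum_antidiagonal_eq_sum_range_succ_mk, Finset.mul_sum, ← Finset.sum_add_distrib]
        have hterm : ∀ i ∈ Finset.range (n+1),
            g2 i * g2 (n-i) + (q*x) * (g2 i * h2 (n-i))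
            = (1+((n-i:ℕ):ℝ)) * (a i * a (n-i)) * (q^n * x^n) := by
          intro i hi
          rw [Finset.mem_range] at hi
          have hin : i ≤ n := by omega
          have hqxn : (q*x)^i * (q*x)^(n-i) = q^n * x^n := by
            rw [← pow_add, show i + (n-i) = n from by omega, mul_pow]
          rcases Nat.eq_zero_or_pos (n-i) with h0 | h0
          · have hieq : i = n := by omega
            rw [h0, hieq, hg2def, hh2def]; simp only []
            simp only [Nat.cast_zero, zero_mul, pow_zero, mul_zero, mul_one, add_zero, mul_pow]
            ring
          · have e2 : (q*x)^i * ((q*x)^(n-i-1) * (q*x)) = q^n * x^n := by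
              rw [← pow_succ, show (n-i-1)+1 = n-i from by omega]
              exact hqxn
            rw [hg2def, hh2def]; simp only []
            linear_combination (a i * a (n-i)) * hqxn + (((n-i:ℕ):ℝ) * a i * a (n-i)) * e2
        rw [Finset.sum_congr rfl hterm]
        rw [Finset.mul_sum, Finset.mul_sum, Finset.sum_mul, Finset.sum_mul]
        apply Finset.sum_congr rfl
        intro i _
        ring
      have hpcn : pcx n = p n / (Nat.factorial n) * x^n := by
        show (if n = 0 then 0 else p n / (Nat.factorial n)) * x^n = p n / (Nat.factorial n) * x^n
        rw [if_neg (by omega)]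
      rw [hit, hD1n, hD2n, hpcn, add_zero]
      calc a n * x^n ≤ (p n / (Nat.factorial n)
          + (|s|:ℝ)*(1+ε) * ∑ i ∈ Finset.range (n+1), (i:ℝ) * a i * a (n-i) * θ^(i-1)
          + (|s|:ℝ) * (∑ i ∈ Finset.range (n+1), (1+((n-i:ℕ):ℝ)) * (a i * a (n-i))) * q^n) * x^n := hmul
        _ = p n / (Nat.factorial n) * x^n
          + ((|s|:ℝ)*(1+ε) * ∑ i ∈ Finset.range (n+1), (i:ℝ) * a i * a (n-i) * θ^(i-1)) * x^n
          + ((|s|:ℝ) * (∑ i ∈ Finset.range (n+1), (1+((n-i:ℕ):ℝ)) * (a i * a (n-i))) * q^n) * x^n := by ring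
  -- sum up
  have hRHSsm : Summable (fun n => pcx n + D1 n + D2 n + it n) :=
    ((hpcs.add hD1sm).add hD2sm).add hits
  have hstep1 : (∑' n, a n * x ^ n) ≤ ∑' n, (pcx n + D1 n + D2 n + it n) :=
    Summable.tsum_le_tsum key hax hRHSsm
  have hsplit4 : ∑' n, (pcx n + D1 n + D2 n + it n)
      = (∑' n, pcx n) + (∑' n, D1 n) + (∑' n, D2 n) + (∑' n, it n) := by
    rw [Summable.tsum_add ((hpcs.add hD1sm).add hD2sm) hits,
        Summable.tsum_add (hpcs.add hD1sm) hD2sm, Summable.tsum_add hpcs hD1sm]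
  -- identify pieces
  have hT1eq : (∑' n, D1 n)
      = (|s| : ℝ) * (1 + ε) * x * (∑' n : ℕ, (n : ℝ) * a n * (θ * x) ^ (n - 1)) * (∑' n, a n * x ^ n) := by
    rw [hD1def, ← hD1eq, hf1def, tsum_mul_left]
    try rw [hc1]
    try rw [hgdef]
    try ring
  have hT2eq : (∑' n, D2 n)
      = (|s| : ℝ) * ((∑' n, a n * (q * x) ^ n) ^ 2
        + q * x * (∑' n, a n * (q * x) ^ n) * (∑' n : ℕ, (n : ℝ) * a n * (q * x) ^ (n - 1))) := by
    rw [hD2def]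
    rw [tsum_mul_left, Summable.tsum_add hGGsm (hGHsm.mul_left (q*x)), tsum_mul_left]
    rw [← hGGeq, ← hGHeq, hg2def, hh2def]
    ring
  have hitsum : (∑' n, it n) = P.eval x := by
    have h1 : (∑' n, it n) = ∑ n ∈ Finset.range (N+1), it n := by
      apply tsum_eq_sum
      intro n hn
      rw [Finset.mem_range] at hn
      show (if n ≤ N then a n * x^n else 0) = 0
      rw [if_neg (by omega)]
    have h2 : ∑ n ∈ Finset.range (N+1), it n = ∑ n ∈ Finset.range (N+1), a n * x^n := by
      apply Finset.sum_congr rfl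
      intro n hn
      rw [Finset.mem_range] at hn
      show (if n ≤ N then a n * x^n else 0) = a n * x^n
      rw [if_pos (by omega)]
    have h3 : P.eval x = ∑ n ∈ Finset.range (N+1), a n * x^n := by
      rw [hP, Polynomial.eval_finset_sum]
      apply Finset.sum_congr rfl
      intro n _
      simp
    rw [h1, h2, h3]
  have hpcxeq : (∑' n, pcx n) = ∑' k, (if k = 0 then 0 else p k / (Nat.factorial k)) * x ^ k := by
    rw [hpcxdef]
  calc (∑' n, a n * x ^ n) ≤ ∑' n, (pcx n + D1 n + D2 n + it n) := hstep1
    _ = (∑' n, pcx n) + (∑' n, D1 n) + (∑' n, D2 n) + (∑' n, it n) := hsplit4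
    _ = (∑' k, (if k = 0 then 0 else p k / (Nat.factorial k)) * x ^ k)
        + (|s| : ℝ) * (1 + ε) * x * (∑' n : ℕ, (n : ℝ) * a n * (θ * x) ^ (n - 1)) * (∑' n, a n * x ^ n)
        + (|s| : ℝ) * ((∑' n, a n * (q * x) ^ n) ^ 2
            + q * x * (∑' n, a n * (q * x) ^ n) * (∑' n : ℕ, (n : ℝ) * a n * (q * x) ^ (n - 1)))
        + P.eval x := by
          rw [hpcxeq, hT1eq, hT2eq, hitsum]
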